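/- Let v ∈ S ∪ T satisfy dist(v, O) ≥ √5 and let x ∈ F satisfy ‖x − v‖ < 2, where F = {p : dist(p, O) ≥ 1}. Then the length of the straight-line path from x to v is strictly less than 2, and this path is contained in F. -/

import Mathlib

private lemma seg_key {E : Type*} [NormedAddCommGroup E] [InnerProductSpace ℝ E]
    (x v o : E) (hx : 1 ≤ ‖x - o‖) (hv : Real.sqrt 5 ≤ ‖v - o‖)
    (hxv : ‖x - v‖ < 2) {t : ℝ} (ht0 : 0 ≤ t) (ht1 : t ≤ 1) :
    1 ≤ ‖(x + t • (v - x)) - o‖ := by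
  set a := x - o with ha
  set b := v - x with hb
  have hy : (x + t • (v - x)) - o = a + t • b := by
    simp only [ha, hb]; abel
  have hAB : v - o = a + b := by simp only [ha, hb]; abel
  have hnormsq : ‖a + t • b‖ ^ 2 = ‖a‖ ^ 2 + 2 * (t * inner ℝ a b) + t ^ 2 * ‖b‖ ^ 2 := by
    rw [@norm_add_sq_real, real_inner_smul_right, norm_smul]
    simp [Real.norm_eq_abs, mul_pow, sq_abs]
  have hvsq : ‖a + b‖ ^ 2 = ‖a‖ ^ 2 + 2 * inner ℝ a b + ‖b‖ ^ 2 := norm_add_sq_real a b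
  have h5 : (5 : ℝ) ≤ ‖a + b‖ ^ 2 := by
    have h0 : Real.sqrt 5 ^ 2 = 5 := Real.sq_sqrt (by norm_num)
    rw [← hAB]
    nlinarith [norm_nonneg (v - o), Real.sqrt_nonneg 5]
  have hC : ‖b‖ ^ 2 < 4 := by
    have : ‖b‖ < 2 := by rwa [hb, ← norm_neg, neg_sub]
    nlinarith [norm_nonneg b]
  have hA : 1 ≤ ‖a‖ ^ 2 := by nlinarith [norm_nonneg a]
  have hCS : (inner ℝ a b : ℝ) ^ 2 ≤ ‖a‖ ^ 2 * ‖b‖ ^ 2 := by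
    have := abs_real_inner_le_norm a b
    nlinarith [abs_nonneg (inner ℝ a b : ℝ), le_abs_self (inner ℝ a b : ℝ), neg_abs_le (inner ℝ a b : ℝ)]
  have hgoal : 1 ≤ ‖a + t • b‖ ^ 2 := by
    rw [hnormsq]
    set A := ‖a‖ ^ 2
    set B := (inner ℝ a b : ℝ)
    set C := ‖b‖ ^ 2
    have hC0 : 0 ≤ C := sq_nonneg _
    have h5' : (5 : ℝ) ≤ A + 2 * B + C := by rw [hvsq] at h5; linarith
    nlinarith [sq_nonneg (C * t + B), sq_nonneg (t - 1), sq_nonneg t,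
      mul_nonneg ht0 (sub_nonneg.mpr ht1), sq_nonneg (B + C), sq_nonneg B,
      mul_nonneg hC0 ht0, mul_nonneg (mul_nonneg hC0 ht0) ht0]
  rw [hy]
  nlinarith [norm_nonneg (a + t • b)]

/-- Shortcut lemma: if `dist(v, O) ≥ √5`, `x` is in the free space
`F = {p : dist(p, O) ≥ 1}`, and `‖x − v‖ < 2`, then the straight-line path
from `x` to `v` has length less than `2` and is contained in `F`. -/
theorem shortcut_path_in_free_space
    (O : Set (EuclideanSpace ℝ (Fin 2)))
    (v x : EuclideanSpace ℝ (Fin 2))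
    (hv : Real.sqrt 5 ≤ Metric.infDist v O)
    (hx : 1 ≤ Metric.infDist x O)
    (hxv : ‖x - v‖ < 2) :
    ‖x - v‖ < 2 ∧ ∀ y ∈ segment ℝ x v, 1 ≤ Metric.infDist y O := by
  refine ⟨hxv, ?_⟩
  intro y hy
  rcases Set.eq_empty_or_nonempty O with hO | hO
  · subst hO
    rw [Metric.infDist_empty] at hv
    nlinarith [Real.sqrt_nonneg 5, Real.sq_sqrt (by norm_num : (0:ℝ) ≤ 5)]
  · rw [segment_eq_image'] at hy
    obtain ⟨t, ht, rfl⟩ := hy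
    rw [← not_lt, Metric.infDist_lt_iff hO]
    push_neg
    intro o ho
    have h1 : 1 ≤ dist x o := hx.trans (Metric.infDist_le_dist_of_mem ho)
    have h2 : Real.sqrt 5 ≤ dist v o := hv.trans (Metric.infDist_le_dist_of_mem ho)
    rw [dist_eq_norm] at h1 h2 ⊢
    exact seg_key x v o h1 h2 hxv ht.1 ht.2
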